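/- As f → 0, the effective drag coefficient satisfies ζ(f) = a₀·(1 + f·(1/2 − a₁/a₀)) + O(f²); that is, ζ(f) − a₀ − f·(a₀/2 − a₁) is O(f²) near f = 0 (with ζ extended by continuity to ζ(0) = M₀(0) = a₀). -/

import Mathlib

open MeasureTheory intervalIntegral Asymptotics Filter

noncomputable def w0 (φ : ℝ → ℝ) (f x : ℝ) : ℝ :=
  ∫ s in (0:ℝ)..1, Real.exp (φ (x + s) - φ x - f * s)

noncomputable def M0 (φ : ℝ → ℝ) (f : ℝ) : ℝ := ∫ x in (0:ℝ)..1, w0 φ f x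

noncomputable def w1 (φ : ℝ → ℝ) (f x : ℝ) : ℝ :=
  ∫ s in (0:ℝ)..1, (w0 φ f (x + s)) ^ 2 * Real.exp (φ (x + s) - φ x - f * s)

noncomputable def M1 (φ : ℝ → ℝ) (f : ℝ) : ℝ := ∫ x in (0:ℝ)..1, w1 φ f x

/-- Quadratic Taylor bound for `exp`. -/
lemma stmt8_exp_quad {t : ℝ} (ht : |t| ≤ 1) : |Real.exp t - (1 + t)| ≤ t ^ 2 := by
  have h := Real.exp_bound ht (n := 2) (by norm_num)
  norm_num [Finset.sum_range_succ] at h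
  nlinarith [sq_abs t, sq_nonneg t]

/-- Cubic Taylor bound for `exp`. -/
lemma stmt8_exp_cub {t : ℝ} (ht : |t| ≤ 1) :
    |Real.exp t - (1 + t + t ^ 2 / 2)| ≤ |t| ^ 3 * (2 / 9) := by
  have h := Real.exp_bound ht (n := 3) (by norm_num)
  norm_num [Finset.sum_range_succ, Nat.factorial] at h
  linarith

/-- A continuous periodic function is bounded. -/
lemma stmt8_bound (φ : ℝ → ℝ) (hφc : Continuous φ) (hφper : ∀ x, φ (x + 1) = φ x) :
    ∃ C, 0 ≤ C ∧ ∀ x, |φ x| ≤ C := by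
  obtain ⟨C, hC⟩ := (isCompact_Icc (a := (0:ℝ)) (b := 1)).exists_bound_of_continuousOn
    hφc.continuousOn
  have hper : Function.Periodic φ 1 := hφper
  refine ⟨C, le_trans (abs_nonneg _) (by simpa using hC 0 (by norm_num)), fun x => ?_⟩
  have h1 : φ (x - (⌊x⌋ : ℝ) * 1) = φ x := hper.sub_int_mul_eq ⌊x⌋
  have h2 : x - (⌊x⌋ : ℝ) * 1 ∈ Set.Icc (0:ℝ) 1 := by
    simp only [mul_one]
    constructor
    · linarith [Int.floor_le x]
    · linarith [Int.lt_floor_add_one x]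
  rw [← h1]; simpa using hC _ h2

/-- `M0 φ 0 = a0`. -/
lemma stmt8_M00 (φ : ℝ → ℝ) (hφper : ∀ x, φ (x + 1) = φ x) :
    M0 φ 0 = (∫ x in (0:ℝ)..1, Real.exp (-φ x)) * ∫ s in (0:ℝ)..1, Real.exp (φ s) := by
  have hper : Function.Periodic (fun u => Real.exp (φ u)) 1 := fun u => by simp [hφper u]
  have key : ∀ x : ℝ, w0 φ 0 x = Real.exp (-φ x) * ∫ s in (0:ℝ)..1, Real.exp (φ s) := by
    intro x
    have h0 : w0 φ 0 x = ∫ s in (0:ℝ)..1, Real.exp (-φ x) * Real.exp (φ (x + s)) := by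
      unfold w0
      refine intervalIntegral.integral_congr fun s _ => ?_
      rw [← Real.exp_add]; ring_nf
    rw [h0, intervalIntegral.integral_const_mul]
    congr 1
    have h1 : (∫ s in (0:ℝ)..1, Real.exp (φ (x + s))) = ∫ u in x..(x+1), Real.exp (φ u) := by
      simpa using intervalIntegral.integral_comp_add_left (a := (0:ℝ)) (b := 1)
        (fun u => Real.exp (φ u)) x
    rw [h1]
    simpa using hper.intervalIntegral_add_eq x 0
  unfold M0
  rw [intervalIntegral.integral_congr
    (g := fun x => Real.exp (-φ x) * ∫ s in (0:ℝ)..1, Real.exp (φ s)) (fun x _ => key x),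
    intervalIntegral.integral_mul_const]

/-- Pointwise second-order bound on `w0` in the force. -/
lemma stmt8_w0_bound (φ : ℝ → ℝ) (hφc : Continuous φ) (C : ℝ) (hC : ∀ x, |φ x| ≤ C)
    (f x : ℝ) (hf : |f| ≤ 1) :
    |w0 φ f x - w0 φ 0 x + f * ∫ s in (0:ℝ)..1, Real.exp (φ (x + s) - φ x) * s|
      ≤ Real.exp (2 * C) * f ^ 2 := by
  have hc1 : Continuous fun s : ℝ => Real.exp (φ (x + s) - φ x - f * s) := by fun_prop
  have hc2 : Continuous fun s : ℝ => Real.exp (φ (x + s) - φ x - 0 * s) := by fun_prop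
  have hc3 : Continuous fun s : ℝ => f * (Real.exp (φ (x + s) - φ x) * s) := by fun_prop
  have heq : w0 φ f x - w0 φ 0 x + f * (∫ s in (0:ℝ)..1, Real.exp (φ (x + s) - φ x) * s)
      = ∫ s in (0:ℝ)..1,
          Real.exp (φ (x + s) - φ x) * (Real.exp (-(f * s)) - (1 + -(f * s))) := by
    unfold w0
    rw [← intervalIntegral.integral_const_mul, ← intervalIntegral.integral_sub
      (hc1.intervalIntegrable 0 1) (hc2.intervalIntegrable 0 1),
      ← intervalIntegral.integral_add
      (show IntervalIntegrable (fun s : ℝ => Real.exp (φ (x + s) - φ x - f * s)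
        - Real.exp (φ (x + s) - φ x - 0 * s)) volume 0 1 from
        (hc1.sub hc2).intervalIntegrable 0 1) (hc3.intervalIntegrable 0 1)]
    refine intervalIntegral.integral_congr fun s _ => ?_
    have e1 : φ (x + s) - φ x - f * s = (φ (x + s) - φ x) + (-(f * s)) := by ring
    have e2 : φ (x + s) - φ x - 0 * s = (φ (x + s) - φ x) + 0 := by ring
    rw [e1, e2, Real.exp_add, Real.exp_add, Real.exp_zero]
    ring
  rw [heq]
  have hb := intervalIntegral.norm_integral_le_of_norm_le_const
    (a := (0:ℝ)) (b := 1) (C := Real.exp (2 * C) * f ^ 2)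
    (f := fun s => Real.exp (φ (x + s) - φ x) * (Real.exp (-(f * s)) - (1 + -(f * s))))
    (fun s hs => by
      rw [Set.uIoc_of_le (by norm_num : (0:ℝ) ≤ 1)] at hs
      obtain ⟨hs0, hs1⟩ := hs
      have hts : |(-(f * s))| ≤ 1 := by
        rw [abs_neg, abs_mul, abs_of_pos hs0]
        calc |f| * s ≤ 1 * 1 := mul_le_mul hf hs1 hs0.le zero_le_one
        _ = 1 := by norm_num
      have h1 := stmt8_exp_quad hts
      have hs2 : s ^ 2 ≤ 1 := by nlinarith
      have h2 : (-(f * s)) ^ 2 ≤ f ^ 2 := by nlinarith [sq_nonneg f]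
      have h3 : Real.exp (φ (x + s) - φ x) ≤ Real.exp (2 * C) :=
        Real.exp_le_exp.2 (by cases abs_le.1 (hC (x + s)); cases abs_le.1 (hC x); linarith)
      rw [Real.norm_eq_abs, abs_mul, abs_of_pos (Real.exp_pos _)]
      exact mul_le_mul h3 (h1.trans h2) (abs_nonneg _) (Real.exp_pos _).le)
  simpa using hb

/-- Second-order bound on `M0`. -/
lemma stmt8_M0_bound (φ : ℝ → ℝ) (hφc : Continuous φ) (hφper : ∀ x, φ (x + 1) = φ x)
    (C : ℝ) (hC : ∀ x, |φ x| ≤ C)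
    (a0 a1 : ℝ)
    (ha0 : a0 = (∫ x in (0:ℝ)..1, Real.exp (-φ x)) * ∫ s in (0:ℝ)..1, Real.exp (φ s))
    (ha1 : a1 = ∫ x in (0:ℝ)..1, ∫ s in (0:ℝ)..1, Real.exp (φ (x + s) - φ x) * s)
    (f : ℝ) (hf : |f| ≤ 1) :
    |M0 φ f - a0 + f * a1| ≤ Real.exp (2 * C) * f ^ 2 := by
  have hw0cont : ∀ g : ℝ, Continuous fun x => w0 φ g x := by
    intro g
    have : Continuous (Function.uncurry fun x s : ℝ => Real.exp (φ (x + s) - φ x - g * s)) := by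
      fun_prop
    exact intervalIntegral.continuous_parametric_intervalIntegral_of_continuous' this 0 1
  have hJcont : Continuous fun x => ∫ s in (0:ℝ)..1, Real.exp (φ (x + s) - φ x) * s := by
    have : Continuous (Function.uncurry fun x s : ℝ => Real.exp (φ (x + s) - φ x) * s) := by
      fun_prop
    exact intervalIntegral.continuous_parametric_intervalIntegral_of_continuous' this 0 1
  have hM00 : M0 φ 0 = a0 := by rw [stmt8_M00 φ hφper, ha0]
  have heq : M0 φ f - a0 + f * a1
      = ∫ x in (0:ℝ)..1, (w0 φ f x - w0 φ 0 x
          + f * ∫ s in (0:ℝ)..1, Real.exp (φ (x + s) - φ x) * s) := by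
    rw [← hM00, ha1]
    unfold M0
    rw [intervalIntegral.integral_add
      (show IntervalIntegrable (fun x => w0 φ f x - w0 φ 0 x) volume 0 1 from
        ((hw0cont f).sub (hw0cont 0)).intervalIntegrable 0 1)
      (show IntervalIntegrable (fun x => f * ∫ s in (0:ℝ)..1, Real.exp (φ (x + s) - φ x) * s)
        volume 0 1 from (continuous_const.mul hJcont).intervalIntegrable 0 1),
      intervalIntegral.integral_sub ((hw0cont f).intervalIntegrable 0 1)
      ((hw0cont 0).intervalIntegrable 0 1),
      intervalIntegral.integral_const_mul]
  rw [heq]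
  have hb := intervalIntegral.norm_integral_le_of_norm_le_const
    (a := (0:ℝ)) (b := 1) (C := Real.exp (2 * C) * f ^ 2)
    (f := fun x => w0 φ f x - w0 φ 0 x
        + f * ∫ s in (0:ℝ)..1, Real.exp (φ (x + s) - φ x) * s)
    (fun x _ => by
      rw [Real.norm_eq_abs]
      exact stmt8_w0_bound φ hφc C hC f x hf)
  simpa using hb

/-- Lower bound on the denominator `1 - e^{-f}`. -/
lemma stmt8_denom (f : ℝ) (hf : |f| ≤ 1) : |f| / 4 ≤ |1 - Real.exp (-f)| := by
  have ht : |(-f)| ≤ 1 := by rwa [abs_neg]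
  have h1 := stmt8_exp_cub ht
  rw [abs_neg] at h1
  have e1 : 1 + -f + (-f) ^ 2 / 2 = 1 - f + f ^ 2 / 2 := by ring
  rw [e1] at h1
  -- |1 - exp(-f)| ≥ |f - f^2/2| - |err|
  have tri1 : |f - f ^ 2 / 2| ≤ |1 - Real.exp (-f)| + |Real.exp (-f) - (1 - f + f ^ 2 / 2)| := by
    have : f - f ^ 2 / 2 = (1 - Real.exp (-f)) + (Real.exp (-f) - (1 - f + f ^ 2 / 2)) := by ring
    rw [this]; exact abs_add_le _ _
  have tri2 : |f| ≤ |f - f ^ 2 / 2| + |f ^ 2 / 2| := by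
    have : f = (f - f ^ 2 / 2) + f ^ 2 / 2 := by ring
    nth_rewrite 1 [this]; exact abs_add_le _ _
  have hsq : |f ^ 2 / 2| = f ^ 2 / 2 := abs_of_nonneg (by positivity)
  have hf2 : f ^ 2 ≤ |f| := by nlinarith [sq_abs f, abs_nonneg f]
  have hf4 : |f| ^ 2 ≤ 1 := by nlinarith [abs_nonneg f]
  have hf3 : |f| ^ 3 ≤ |f| := by nlinarith [abs_nonneg f, hf4]
  linarith [abs_nonneg f, abs_nonneg (1 - Real.exp (-f))]

theorem stmt_8 (φ : ℝ → ℝ) (hφc : Continuous φ) (hφper : ∀ x, φ (x + 1) = φ x)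
    (a0 a1 : ℝ)
    (ha0 : a0 = (∫ x in (0:ℝ)..1, Real.exp (-φ x)) * ∫ s in (0:ℝ)..1, Real.exp (φ s))
    (ha1 : a1 = ∫ x in (0:ℝ)..1, ∫ s in (0:ℝ)..1, Real.exp (φ (x + s) - φ x) * s)
    (ζ : ℝ → ℝ) (hζ : ∀ f, f ≠ 0 → ζ f = f * M0 φ f / (1 - Real.exp (-f)))
    (hζ0 : ζ 0 = M0 φ 0) :
    (fun f => ζ f - a0 - f * (a0 / 2 - a1)) =O[nhds 0] (fun f => f ^ 2) := by
  obtain ⟨C, hC0, hC⟩ := stmt8_bound φ hφc hφper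
  set K := Real.exp (2 * C) with hK
  set c0 := a0 / 2 - a1 with hc0
  set B := K + |c0| / 2 + (|a0| + |c0|) with hB
  have hKpos : 0 < K := Real.exp_pos _
  have hBpos : 0 < B := by positivity
  rw [Asymptotics.isBigO_iff]
  refine ⟨4 * B, ?_⟩
  rw [Metric.eventually_nhds_iff]
  refine ⟨1, one_pos, fun {f} hdist => ?_⟩
  have hf : |f| ≤ 1 := by
    rw [Real.dist_eq, sub_zero] at hdist; exact hdist.le
  have hnorm2 : ‖f ^ 2‖ = f ^ 2 := by
    rw [Real.norm_eq_abs, abs_of_nonneg (sq_nonneg f)]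
  rw [Real.norm_eq_abs, hnorm2]
  by_cases hf0 : f = 0
  · subst hf0
    simp only [zero_mul, sub_zero, mul_zero]
    rw [hζ0, stmt8_M00 φ hφper, ← ha0]
    simp
  · -- main case
    have hd : |f| / 4 ≤ |1 - Real.exp (-f)| := stmt8_denom f hf
    have hfpos : 0 < |f| := abs_pos.2 hf0
    have hdne : (1 - Real.exp (-f)) ≠ 0 := by
      intro h
      rw [h] at hd
      simp at hd
      linarith
    have hR : |M0 φ f - a0 + f * a1| ≤ K * f ^ 2 :=
      stmt8_M0_bound φ hφc hφper C hC a0 a1 ha0 ha1 f hf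
    have hP : |Real.exp (-f) - (1 - f + f ^ 2 / 2)| ≤ |f| ^ 3 := by
      have ht : |(-f)| ≤ 1 := by rwa [abs_neg]
      have h1 := stmt8_exp_cub ht
      rw [abs_neg] at h1
      have e1 : 1 + -f + (-f) ^ 2 / 2 = 1 - f + f ^ 2 / 2 := by ring
      rw [e1] at h1
      nlinarith [abs_nonneg f, pow_nonneg (abs_nonneg f) 3]
    -- the numerator
    set R := M0 φ f - a0 + f * a1 with hRdef
    set P := Real.exp (-f) - (1 - f + f ^ 2 / 2) with hPdef
    have hE : f * M0 φ f - (a0 + f * c0) * (1 - Real.exp (-f))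
        = f * R + (c0 / 2) * f ^ 3 + (a0 + f * c0) * P := by
      rw [hRdef, hPdef, hc0]; ring
    have hEb : |f * M0 φ f - (a0 + f * c0) * (1 - Real.exp (-f))| ≤ B * |f| ^ 3 := by
      rw [hE]
      have t1 : |f * R| ≤ K * |f| ^ 3 := by
        rw [abs_mul]
        calc |f| * |R| ≤ |f| * (K * f ^ 2) :=
              mul_le_mul_of_nonneg_left hR (abs_nonneg f)
        _ = K * |f| ^ 3 := by rw [← sq_abs]; ring
      have t2 : |(c0 / 2) * f ^ 3| ≤ |c0| / 2 * |f| ^ 3 := by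
        rw [abs_mul, abs_pow]
        apply mul_le_mul_of_nonneg_right _ (pow_nonneg (abs_nonneg f) 3)
        rw [abs_div]; simp
      have t3 : |(a0 + f * c0) * P| ≤ (|a0| + |c0|) * |f| ^ 3 := by
        rw [abs_mul]
        have h4 : |a0 + f * c0| ≤ |a0| + |c0| := by
          calc |a0 + f * c0| ≤ |a0| + |f * c0| := abs_add_le _ _
          _ ≤ |a0| + |c0| := by
              rw [abs_mul]
              nlinarith [abs_nonneg c0]
        exact mul_le_mul h4 hP (abs_nonneg _) (by positivity)
      calc |f * R + (c0 / 2) * f ^ 3 + (a0 + f * c0) * P|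
          ≤ |f * R + (c0 / 2) * f ^ 3| + |(a0 + f * c0) * P| := abs_add_le _ _
      _ ≤ |f * R| + |(c0 / 2) * f ^ 3| + |(a0 + f * c0) * P| := by
          linarith [abs_add_le (f * R) ((c0 / 2) * f ^ 3)]
      _ ≤ B * |f| ^ 3 := by rw [hB]; linarith
    have hkey : ζ f - a0 - f * c0
        = (f * M0 φ f - (a0 + f * c0) * (1 - Real.exp (-f))) / (1 - Real.exp (-f)) := by
      rw [hζ f hf0]
      field_simp
      ring
    rw [hkey, abs_div]
    have hdpos : 0 < |1 - Real.exp (-f)| := abs_pos.2 hdne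
    calc |f * M0 φ f - (a0 + f * c0) * (1 - Real.exp (-f))| / |1 - Real.exp (-f)|
        ≤ (B * |f| ^ 3) / (|f| / 4) := by
          exact div_le_div₀ (by positivity) hEb (by positivity) hd
    _ = 4 * B * f ^ 2 := by
        rw [show |f| ^ 3 = f ^ 2 * |f| by rw [← sq_abs]; ring]
        field_simp
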